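/- Let G be a {2P3, P3+K3, 2K3, C4, C5, C6}-free graph containing an induced 2K2 on vertices {1,2,3,4} with edges 12 and 34, and let N_X be the set of vertices outside {1,2,3,4} whose neighborhood in {1,2,3,4} equals X. If N_1 ∪ N_2 ∪ N_12 is nonempty, then N_3 is empty or N_4 is empty. -/

import Mathlib

open scoped Classical

/-- Graph on `Fin n` with the given edge list. -/
def graphOfList (n : ℕ) (l : List (ℕ × ℕ)) : SimpleGraph (Fin n) :=
  SimpleGraph.fromRel (fun a b => ((a : ℕ), (b : ℕ)) ∈ l)

/-- `G` contains no induced subgraph isomorphic to `H`. -/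
def Free {α : Type*} {V : Type*} (H : SimpleGraph α) (G : SimpleGraph V) : Prop :=
  IsEmpty (H ↪g G)

def twoP3 : SimpleGraph (Fin 6) := graphOfList 6 [(0,1),(1,2),(3,4),(4,5)]
def p3PlusK3 : SimpleGraph (Fin 6) := graphOfList 6 [(0,1),(1,2),(3,4),(4,5),(3,5)]
def twoK3 : SimpleGraph (Fin 6) := graphOfList 6 [(0,1),(1,2),(0,2),(3,4),(4,5),(3,5)]
def cycle4 : SimpleGraph (Fin 4) := graphOfList 4 [(0,1),(1,2),(2,3),(3,0)]
def cycle5 : SimpleGraph (Fin 5) := graphOfList 5 [(0,1),(1,2),(2,3),(3,4),(4,0)]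
def cycle6 : SimpleGraph (Fin 6) := graphOfList 6 [(0,1),(1,2),(2,3),(3,4),(4,5),(5,0)]

/-- `G` is `{2P3, P3+K3, 2K3, C4, C5, C6}`-free. -/
def FFree {V : Type*} (G : SimpleGraph V) : Prop :=
  Free twoP3 G ∧ Free p3PlusK3 G ∧ Free twoK3 G ∧ Free cycle4 G ∧ Free cycle5 G ∧ Free cycle6 G

/-- `v1 v2 v3 v4` form an induced `2K2` with edges `v1v2` and `v3v4`. -/
def Induced2K2 {V : Type*} (G : SimpleGraph V) (v1 v2 v3 v4 : V) : Prop :=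
  v1 ≠ v2 ∧ v1 ≠ v3 ∧ v1 ≠ v4 ∧ v2 ≠ v3 ∧ v2 ≠ v4 ∧ v3 ≠ v4 ∧
  G.Adj v1 v2 ∧ G.Adj v3 v4 ∧ ¬ G.Adj v1 v3 ∧ ¬ G.Adj v1 v4 ∧ ¬ G.Adj v2 v3 ∧ ¬ G.Adj v2 v4

lemma noC4 {V : Type*} {G : SimpleGraph V} (hf : Free cycle4 G) {a b c d : V}
    (hab : a ≠ b) (hac : a ≠ c) (had : a ≠ d) (hbc : b ≠ c) (hbd : b ≠ d) (hcd : c ≠ d)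
    (e1 : G.Adj a b) (e2 : G.Adj b c) (e3 : G.Adj c d) (e4 : G.Adj d a)
    (n1 : ¬ G.Adj a c) (n2 : ¬ G.Adj b d) : False := by
  have n1' : ¬ G.Adj c a := fun h => n1 h.symm
  have n2' : ¬ G.Adj d b := fun h => n2 h.symm
  have e1' := e1.symm; have e2' := e2.symm; have e3' := e3.symm; have e4' := e4.symm
  refine hf.false ⟨⟨![a,b,c,d], ?_⟩, ?_⟩
  · intro i j hij
    fin_cases i <;> fin_cases j <;>
      first
        | rfl
        | exact absurd hij (by assumption)
        | exact absurd hij.symm (by assumption)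
  · intro i j
    fin_cases i <;> fin_cases j <;>
      first
        | exact iff_of_true (by assumption)
            (by simp [cycle4, graphOfList, SimpleGraph.fromRel_adj]; try decide)
        | exact iff_of_false (by first | assumption | exact G.irrefl)
            (by simp [cycle4, graphOfList, SimpleGraph.fromRel_adj]; try decide)

lemma noC5 {V : Type*} {G : SimpleGraph V} (hf : Free cycle5 G) {a b c d e : V}
    (hab : a ≠ b) (hac : a ≠ c) (had : a ≠ d) (hae : a ≠ e)
    (hbc : b ≠ c) (hbd : b ≠ d) (hbe : b ≠ e) (hcd : c ≠ d) (hce : c ≠ e) (hde : d ≠ e)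
    (e1 : G.Adj a b) (e2 : G.Adj b c) (e3 : G.Adj c d) (e4 : G.Adj d e) (e5 : G.Adj e a)
    (nac : ¬ G.Adj a c) (nad : ¬ G.Adj a d) (nbd : ¬ G.Adj b d)
    (nbe : ¬ G.Adj b e) (nce : ¬ G.Adj c e) : False := by
  have nac' : ¬ G.Adj c a := fun h => nac h.symm
  have nad' : ¬ G.Adj d a := fun h => nad h.symm
  have nbd' : ¬ G.Adj d b := fun h => nbd h.symm
  have nbe' : ¬ G.Adj e b := fun h => nbe h.symm
  have nce' : ¬ G.Adj e c := fun h => nce h.symm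
  have e1' := e1.symm; have e2' := e2.symm; have e3' := e3.symm; have e4' := e4.symm; have e5' := e5.symm
  refine hf.false ⟨⟨![a,b,c,d,e], ?_⟩, ?_⟩
  · intro i j hij
    fin_cases i <;> fin_cases j <;>
      first
        | rfl
        | exact absurd hij (by assumption)
        | exact absurd hij.symm (by assumption)
  · intro i j
    fin_cases i <;> fin_cases j <;>
      first
        | exact iff_of_true (by assumption)
            (by simp [cycle5, graphOfList, SimpleGraph.fromRel_adj]; try decide)
        | exact iff_of_false (by first | assumption | exact G.irrefl)
            (by simp [cycle5, graphOfList, SimpleGraph.fromRel_adj]; try decide)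

set_option maxHeartbeats 1000000 in
lemma no2P3 {V : Type*} {G : SimpleGraph V} (hf : Free twoP3 G) {a b c d e f : V}
    (hab : a ≠ b) (hac : a ≠ c) (had : a ≠ d) (hae : a ≠ e) (haf : a ≠ f)
    (hbc : b ≠ c) (hbd : b ≠ d) (hbe : b ≠ e) (hbf : b ≠ f)
    (hcd : c ≠ d) (hce : c ≠ e) (hcf : c ≠ f) (hde : d ≠ e) (hdf : d ≠ f) (hef : e ≠ f)
    (e1 : G.Adj a b) (e2 : G.Adj b c) (e3 : G.Adj d e) (e4 : G.Adj e f)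
    (nac : ¬ G.Adj a c) (ndf : ¬ G.Adj d f)
    (nad : ¬ G.Adj a d) (nae : ¬ G.Adj a e) (naf : ¬ G.Adj a f)
    (nbd : ¬ G.Adj b d) (nbe : ¬ G.Adj b e) (nbf : ¬ G.Adj b f)
    (ncd : ¬ G.Adj c d) (nce : ¬ G.Adj c e) (ncf : ¬ G.Adj c f) : False := by
  have s1 : ¬ G.Adj c a := fun h => nac h.symm
  have s2 : ¬ G.Adj f d := fun h => ndf h.symm
  have s3 : ¬ G.Adj d a := fun h => nad h.symm
  have s4 : ¬ G.Adj e a := fun h => nae h.symm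
  have s5 : ¬ G.Adj f a := fun h => naf h.symm
  have s6 : ¬ G.Adj d b := fun h => nbd h.symm
  have s7 : ¬ G.Adj e b := fun h => nbe h.symm
  have s8 : ¬ G.Adj f b := fun h => nbf h.symm
  have s9 : ¬ G.Adj d c := fun h => ncd h.symm
  have s10 : ¬ G.Adj e c := fun h => nce h.symm
  have s11 : ¬ G.Adj f c := fun h => ncf h.symm
  have e1' := e1.symm; have e2' := e2.symm; have e3' := e3.symm; have e4' := e4.symm
  refine hf.false ⟨⟨![a,b,c,d,e,f], ?_⟩, ?_⟩
  · intro i j hij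
    fin_cases i <;> fin_cases j <;>
      first
        | rfl
        | exact absurd hij (by assumption)
        | exact absurd hij.symm (by assumption)
  · intro i j
    fin_cases i <;> fin_cases j <;>
      first
        | exact iff_of_true (by assumption)
            (by simp [twoP3, graphOfList, SimpleGraph.fromRel_adj]; try decide)
        | exact iff_of_false (by first | assumption | exact G.irrefl)
            (by simp [twoP3, graphOfList, SimpleGraph.fromRel_adj]; try decide)

set_option maxHeartbeats 1000000 in
lemma noP3K3 {V : Type*} {G : SimpleGraph V} (hf : Free p3PlusK3 G) {a b c d e f : V}
    (hab : a ≠ b) (hac : a ≠ c) (had : a ≠ d) (hae : a ≠ e) (haf : a ≠ f)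
    (hbc : b ≠ c) (hbd : b ≠ d) (hbe : b ≠ e) (hbf : b ≠ f)
    (hcd : c ≠ d) (hce : c ≠ e) (hcf : c ≠ f) (hde : d ≠ e) (hdf : d ≠ f) (hef : e ≠ f)
    (e1 : G.Adj a b) (e2 : G.Adj b c) (e3 : G.Adj d e) (e4 : G.Adj e f) (e5 : G.Adj d f)
    (nac : ¬ G.Adj a c)
    (nad : ¬ G.Adj a d) (nae : ¬ G.Adj a e) (naf : ¬ G.Adj a f)
    (nbd : ¬ G.Adj b d) (nbe : ¬ G.Adj b e) (nbf : ¬ G.Adj b f)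
    (ncd : ¬ G.Adj c d) (nce : ¬ G.Adj c e) (ncf : ¬ G.Adj c f) : False := by
  have s1 : ¬ G.Adj c a := fun h => nac h.symm
  have s3 : ¬ G.Adj d a := fun h => nad h.symm
  have s4 : ¬ G.Adj e a := fun h => nae h.symm
  have s5 : ¬ G.Adj f a := fun h => naf h.symm
  have s6 : ¬ G.Adj d b := fun h => nbd h.symm
  have s7 : ¬ G.Adj e b := fun h => nbe h.symm
  have s8 : ¬ G.Adj f b := fun h => nbf h.symm
  have s9 : ¬ G.Adj d c := fun h => ncd h.symm
  have s10 : ¬ G.Adj e c := fun h => nce h.symm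
  have s11 : ¬ G.Adj f c := fun h => ncf h.symm
  have e1' := e1.symm; have e2' := e2.symm; have e3' := e3.symm; have e4' := e4.symm; have e5' := e5.symm
  refine hf.false ⟨⟨![a,b,c,d,e,f], ?_⟩, ?_⟩
  · intro i j hij
    fin_cases i <;> fin_cases j <;>
      first
        | rfl
        | exact absurd hij (by assumption)
        | exact absurd hij.symm (by assumption)
  · intro i j
    fin_cases i <;> fin_cases j <;>
      first
        | exact iff_of_true (by assumption)
            (by simp [p3PlusK3, graphOfList, SimpleGraph.fromRel_adj]; try decide)
        | exact iff_of_false (by first | assumption | exact G.irrefl)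
            (by simp [p3PlusK3, graphOfList, SimpleGraph.fromRel_adj]; try decide)

theorem n3_or_n4_empty {V : Type*} (G : SimpleGraph V)
    (hfree : FFree G) (v1 v2 v3 v4 : V) (h2K2 : Induced2K2 G v1 v2 v3 v4)
    (hne : ∃ x : V, x ∉ ({v1, v2, v3, v4} : Set V) ∧
      (G.Adj x v1 ∨ G.Adj x v2) ∧ ¬ G.Adj x v3 ∧ ¬ G.Adj x v4) :
    (¬ ∃ y : V, y ∉ ({v1, v2, v3, v4} : Set V) ∧
        G.Adj y v3 ∧ ¬ G.Adj y v1 ∧ ¬ G.Adj y v2 ∧ ¬ G.Adj y v4) ∨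
    (¬ ∃ y : V, y ∉ ({v1, v2, v3, v4} : Set V) ∧
        G.Adj y v4 ∧ ¬ G.Adj y v1 ∧ ¬ G.Adj y v2 ∧ ¬ G.Adj y v3) := by
  obtain ⟨d12, d13, d14, d23, d24, d34, a12, a34, n13, n14, n23, n24⟩ := h2K2
  obtain ⟨x, hxmem, hxor, nx3, nx4⟩ := hne
  by_contra hcon
  push_neg at hcon
  obtain ⟨⟨y, hymem, ay3, ny1, ny2, ny4⟩, ⟨z, hzmem, az4, nz1, nz2, nz3⟩⟩ := hcon
  simp only [Set.mem_insert_iff, Set.mem_singleton_iff, not_or] at hxmem hymem hzmem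
  obtain ⟨xne1, xne2, xne3, xne4⟩ := hxmem
  obtain ⟨yne1, yne2, yne3, yne4⟩ := hymem
  obtain ⟨zne1, zne2, zne3, zne4⟩ := hzmem
  have xney : x ≠ y := fun h => nx3 (h ▸ ay3)
  have xnez : x ≠ z := fun h => nx4 (h ▸ az4)
  have ynez : y ≠ z := fun h => nz3 (h ▸ ay3)
  have n3z : ¬ G.Adj v3 z := fun h => nz3 h.symm
  by_cases hyz : G.Adj y z
  · -- C4 : v3 - y - z - v4 - v3
    exact noC4 hfree.2.2.2.1 (Ne.symm yne3) (Ne.symm zne3) d34 ynez yne4 zne4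
      ay3.symm hyz az4 a34.symm n3z ny4
  by_cases hxy : G.Adj x y
  · by_cases hxz : G.Adj x z
    · -- C5 : x - y - v3 - v4 - z - x
      exact noC5 hfree.2.2.2.2.1 xney xne3 xne4 xnez yne3 yne4 ynez d34
        (Ne.symm zne3) (Ne.symm zne4)
        hxy ay3 a34 az4.symm hxz.symm nx3 nx4 ny4 hyz n3z
    · -- x misses z : use {x,v1,v2} with {z,v4,v3}
      have nzx : ¬ G.Adj z x := fun h => hxz h.symm
      have hcase : ∀ (_ : G.Adj x v1) (_ : G.Adj x v2), False := fun hx1 hx2 =>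
        noP3K3 hfree.2.1 zne4 zne3 (Ne.symm xnez) zne1 zne2
          (Ne.symm d34) (Ne.symm xne4) (Ne.symm d14) (Ne.symm d24)
          (Ne.symm xne3) (Ne.symm d13) (Ne.symm d23) xne1 xne2 d12
          az4 a34.symm hx1 a12 hx2
          nz3 nzx nz1 nz2 (fun h => nx4 h.symm) (fun h => n14 h.symm)
          (fun h => n24 h.symm) (fun h => nx3 h.symm) (fun h => n13 h.symm)
          (fun h => n23 h.symm)
      rcases hxor with hx1 | hx2
      · by_cases hx2 : G.Adj x v2
        · exact hcase hx1 hx2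
        · -- 2P3 : v2-v1-x and z-v4-v3
          exact no2P3 hfree.1 d12.symm (Ne.symm xne2) (Ne.symm zne2) d24 d23
            (Ne.symm xne1) (Ne.symm zne1) d14 d13 xnez xne4 xne3 zne4 zne3 d34.symm
            a12.symm hx1.symm az4 a34.symm
            (fun h => hx2 h.symm) nz3 (fun h => nz2 h.symm) n24 n23
            (fun h => nz1 h.symm) n14 n13 hxz nx4 nx3
      · by_cases hx1 : G.Adj x v1
        · exact hcase hx1 hx2
        · -- 2P3 : v1-v2-x and z-v4-v3
          exact no2P3 hfree.1 d12 (Ne.symm xne1) (Ne.symm zne1) d14 d13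
            (Ne.symm xne2) (Ne.symm zne2) d24 d23 xnez xne4 xne3 zne4 zne3 d34.symm
            a12 hx2.symm az4 a34.symm
            (fun h => hx1 h.symm) nz3 (fun h => nz1 h.symm) n14 n13
            (fun h => nz2 h.symm) n24 n23 hxz nx4 nx3
  · -- x misses y : use {x,v1,v2} with {y,v3,v4}
    have nyx : ¬ G.Adj y x := fun h => hxy h.symm
    have hcase : ∀ (_ : G.Adj x v1) (_ : G.Adj x v2), False := fun hx1 hx2 =>
      noP3K3 hfree.2.1 yne3 yne4 (Ne.symm xney) yne1 yne2
        d34 (Ne.symm xne3) (Ne.symm d13) (Ne.symm d23)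
        (Ne.symm xne4) (Ne.symm d14) (Ne.symm d24) xne1 xne2 d12
        ay3 a34 hx1 a12 hx2
        ny4 nyx ny1 ny2 (fun h => nx3 h.symm) (fun h => n13 h.symm)
        (fun h => n23 h.symm) (fun h => nx4 h.symm) (fun h => n14 h.symm)
        (fun h => n24 h.symm)
    rcases hxor with hx1 | hx2
    · by_cases hx2 : G.Adj x v2
      · exact hcase hx1 hx2
      · -- 2P3 : v2-v1-x and y-v3-v4
        exact no2P3 hfree.1 d12.symm (Ne.symm xne2) (Ne.symm yne2) d23 d24
          (Ne.symm xne1) (Ne.symm yne1) d13 d14 xney xne3 xne4 yne3 yne4 d34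
          a12.symm hx1.symm ay3 a34
          (fun h => hx2 h.symm) ny4 (fun h => ny2 h.symm) n23 n24
          (fun h => ny1 h.symm) n13 n14 hxy nx3 nx4
    · by_cases hx1 : G.Adj x v1
      · exact hcase hx1 hx2
      · -- 2P3 : v1-v2-x and y-v3-v4
        exact no2P3 hfree.1 d12 (Ne.symm xne1) (Ne.symm yne1) d13 d14
          (Ne.symm xne2) (Ne.symm yne2) d23 d24 xney xne3 xne4 yne3 yne4 d34
          a12 hx2.symm ay3 a34
          (fun h => hx1 h.symm) ny4 (fun h => ny1 h.symm) n13 n14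
          (fun h => ny2 h.symm) n23 n24 hxy nx3 nx4
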